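/- Suppose dim P = 2 and dim R = k. Then every abelian subspace E ⊆ Hom(P,R) satisfies dim E ≤ k, and there exists an abelian subspace of dimension exactly k; thus the maximal dimension of an abelian subspace of Hom(P,R) is k. -/

import Mathlib

open Module

/-- A linear subspace `E ⊆ Hom(P,R)` is *abelian* (with respect to a bilinear form `Q` on `R`)
if `Q(A u, B u') = Q(B u, A u')` for all `A, B ∈ E` and all `u, u' : P`. -/
def IsAbelianSubspace {P R : Type*} [AddCommGroup P] [Module ℂ P]
    [AddCommGroup R] [Module ℂ R] (Q : R →ₗ[ℂ] R →ₗ[ℂ] ℂ)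
    (E : Submodule ℂ (P →ₗ[ℂ] R)) : Prop :=
  ∀ A ∈ E, ∀ B ∈ E, ∀ u u' : P, Q (A u) (B u') = Q (B u) (A u')

/-- If `dim P = 2` and `dim R = k`, then every abelian subspace of `Hom(P,R)` has
dimension at most `k`, and there is an abelian subspace of dimension exactly `k`;
thus the maximal dimension of an abelian subspace of `Hom(P,R)` is `k`. -/
theorem abelian_dim_le_of_rank_two {P R : Type*}
    [AddCommGroup P] [Module ℂ P] [FiniteDimensional ℂ P]
    [AddCommGroup R] [Module ℂ R] [FiniteDimensional ℂ R]
    (k : ℕ) (hP : finrank ℂ P = 2) (hR : finrank ℂ R = k)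
    (Q : R →ₗ[ℂ] R →ₗ[ℂ] ℂ)
    (hsym : ∀ x y, Q x y = Q y x)
    (hnd : ∀ x, (∀ y, Q x y = 0) → x = 0) :
    (∀ E : Submodule ℂ (P →ₗ[ℂ] R), IsAbelianSubspace Q E → finrank ℂ ↥E ≤ k) ∧
      (∃ E : Submodule ℂ (P →ₗ[ℂ] R), IsAbelianSubspace Q E ∧ finrank ℂ ↥E = k) := by
  have b : Basis (Fin 2) ℂ P := finBasisOfFinrankEq ℂ P hP
  have hQrefl : LinearMap.BilinForm.IsRefl Q := fun x y h => by rw [hsym]; exact h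
  have hQnd : LinearMap.BilinForm.Nondegenerate Q :=
    (LinearMap.IsRefl.nondegenerate_iff_separatingLeft hQrefl).mpr hnd
  constructor
  · intro E hE
    -- evaluation at `b 0` restricted to `E`
    set f : ↥E →ₗ[ℂ] R := (LinearMap.applyₗ (b 0)).domRestrict E with hf
    set g : ↥(LinearMap.ker f) →ₗ[ℂ] R :=
      ((LinearMap.applyₗ (b 1)).domRestrict E).domRestrict (LinearMap.ker f) with hg
    have hginj : Function.Injective g := by
      intro A B hAB
      ext : 2
      apply b.ext
      intro i
      have h0A : ((A : ↥E) : P →ₗ[ℂ] R) (b 0) = 0 := A.2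
      have h0B : ((B : ↥E) : P →ₗ[ℂ] R) (b 0) = 0 := B.2
      have h1 : ((A : ↥E) : P →ₗ[ℂ] R) (b 1) = ((B : ↥E) : P →ₗ[ℂ] R) (b 1) := hAB
      fin_cases i
      · exact h0A.trans h0B.symm
      · exact h1
    have hrange : LinearMap.range g ≤ LinearMap.BilinForm.orthogonal Q
        (LinearMap.range f) := by
      rintro _ ⟨A, rfl⟩
      rw [LinearMap.BilinForm.mem_orthogonal_iff]
      rintro n ⟨B, rfl⟩
      have h0A : ((A : ↥E) : P →ₗ[ℂ] R) (b 0) = 0 := A.2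
      have habel := hE ((B : ↥E) : P →ₗ[ℂ] R) (B : ↥E).2 ((A : ↥E) : P →ₗ[ℂ] R)
        (A : ↥E).2 (b 0) (b 1)
      show Q (f B) (g A) = 0
      have hfB : f B = ((B : ↥E) : P →ₗ[ℂ] R) (b 0) := rfl
      have hgA : g A = ((A : ↥E) : P →ₗ[ℂ] R) (b 1) := rfl
      rw [hfB, hgA, habel, h0A]
      simp
    have hdim : finrank ℂ ↥(LinearMap.range f) + finrank ℂ ↥(LinearMap.ker f)
        = finrank ℂ ↥E := LinearMap.finrank_range_add_finrank_ker f
    have hker_le : finrank ℂ ↥(LinearMap.ker f)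
        ≤ finrank ℂ ↥(LinearMap.BilinForm.orthogonal Q (LinearMap.range f)) := by
      rw [← LinearMap.finrank_range_of_inj hginj]
      exact Submodule.finrank_mono hrange
    have horth : finrank ℂ ↥(LinearMap.BilinForm.orthogonal Q (LinearMap.range f))
        = finrank ℂ R - finrank ℂ ↥(LinearMap.range f) :=
      LinearMap.BilinForm.finrank_orthogonal hQnd _
    have hV_le : finrank ℂ ↥(LinearMap.range f) ≤ finrank ℂ R := Submodule.finrank_le _
    omega
  · -- The subspace of maps killing `b 1` is abelian of dimension `k`.
    refine ⟨LinearMap.ker (LinearMap.applyₗ (b 1) : (P →ₗ[ℂ] R) →ₗ[ℂ] R), ?_, ?_⟩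
    · intro A hA B hB u u'
      have hA' : A (b 1) = 0 := hA
      have hB' : B (b 1) = 0 := hB
      have hrepr : ∀ v : P, v = b.repr v 0 • b 0 + b.repr v 1 • b 1 := by
        intro v
        have h := b.sum_repr v
        rw [Fin.sum_univ_two] at h
        exact h.symm
      have hAv : ∀ v : P, A v = b.repr v 0 • A (b 0) := by
        intro v
        conv_lhs => rw [hrepr v]
        simp [hA']
      have hBv : ∀ v : P, B v = b.repr v 0 • B (b 0) := by
        intro v
        conv_lhs => rw [hrepr v]
        simp [hB']
      rw [hAv u, hBv u', hBv u, hAv u']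
      simp only [map_smul, LinearMap.smul_apply, smul_eq_mul]
      rw [hsym (A (b 0)) (B (b 0))]
    · have hsurj : Function.Surjective (LinearMap.applyₗ (b 1) : (P →ₗ[ℂ] R) →ₗ[ℂ] R) := by
        intro r
        refine ⟨b.constr ℂ ![0, r], ?_⟩
        simp [LinearMap.applyₗ_apply_apply]
      have hrange : LinearMap.range (LinearMap.applyₗ (b 1) : (P →ₗ[ℂ] R) →ₗ[ℂ] R) = ⊤ :=
        LinearMap.range_eq_top.mpr hsurj
      have hrn := LinearMap.finrank_range_add_finrank_ker
        (LinearMap.applyₗ (b 1) : (P →ₗ[ℂ] R) →ₗ[ℂ] R)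
      rw [hrange, finrank_top] at hrn
      have hhom : finrank ℂ (P →ₗ[ℂ] R) = 2 * k := by
        rw [Module.finrank_linearMap, hP, hR]
      rw [hhom, hR] at hrn
      omega
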